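/- (Positivity of the density) Suppose H is strictly convex and C², g is strictly increasing, and φ > 0 on 𝕋^d. If (m, u) ∈ C²(𝕋^d; ℝ₀⁺) × C¹(𝕋^d) solves the stationary MFG system -u - H(Du) + g(m) - V = 0 and m - div(m D_pH(Du)) - φ = 0 on 𝕋^d, then m(x) > 0 for all x ∈ 𝕋^d. -/

import Mathlib

noncomputable section
open MeasureTheory

/-- Euclidean space `ℝ^d`, the covering space of the torus `𝕋^d`. -/
abbrev Ed (d : ℕ) := Fin d → ℝ

/-- A fundamental domain (unit cube) for the torus `𝕋^d = ℝ^d / ℤ^d`. -/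
def cube (d : ℕ) : Set (Ed d) := Set.univ.pi fun _ => Set.Icc (0:ℝ) 1

/-- `ℤ^d`-periodicity: a function on `ℝ^d` represents a function on the torus `𝕋^d`. -/
def Per {d : ℕ} (u : Ed d → ℝ) : Prop :=
  ∀ (x : Ed d) (m : Fin d → ℤ), u (x + fun i => (m i : ℝ)) = u x

/-- `i`-th partial derivative. -/
def pd {d : ℕ} (i : Fin d) (u : Ed d → ℝ) (x : Ed d) : ℝ :=
  fderiv ℝ u x (Pi.single i 1)

/-- The gradient `Du`. -/
def grad {d : ℕ} (u : Ed d → ℝ) (x : Ed d) : Ed d := fun i => pd i u x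

/-- The `i`-th component of the flux `m D_pH(Du)`. -/
def flux {d : ℕ} (H : Ed d → ℝ) (m u : Ed d → ℝ) (i : Fin d) (y : Ed d) : ℝ :=
  m y * pd i H (grad u y)

/-- The divergence `div(m D_pH(Du))`. -/
def divFlux {d : ℕ} (H : Ed d → ℝ) (m u : Ed d → ℝ) (x : Ed d) : ℝ :=
  ∑ i, pd i (flux H m u i) x

/-- First component of the MFG operator: `-u - H(Du) + g(m) - V`. -/
def F1 {d : ℕ} (H : Ed d → ℝ) (g : ℝ → ℝ) (V : Ed d → ℝ) (m u : Ed d → ℝ) (x : Ed d) : ℝ :=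
  -(u x) - H (grad u x) + g (m x) - V x

/-- Second component of the MFG operator: `m - div(m D_pH(Du)) - φ`. -/
def F2 {d : ℕ} (H : Ed d → ℝ) (φ : Ed d → ℝ) (m u : Ed d → ℝ) (x : Ed d) : ℝ :=
  m x - divFlux H m u x - φ x

/-- Positivity of the density: if `H` is strictly convex and `C²`, `g` is strictly
increasing, `φ > 0` on `𝕋^d`, and `(m,u) ∈ C²(𝕋^d;ℝ₀⁺) × C¹(𝕋^d)` solves the
stationary MFG system `-u - H(Du) + g(m) - V = 0`, `m - div(m D_pH(Du)) - φ = 0`,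
then `m > 0` everywhere. -/
theorem stationary_MFG_density_positive {d : ℕ}
    (H : Ed d → ℝ) (g : ℝ → ℝ) (V φ : Ed d → ℝ)
    (hH : ContDiff ℝ 2 H) (hHconv : StrictConvexOn ℝ Set.univ H)
    (hgc : ContinuousOn g (Set.Ici 0)) (hgmono : StrictMonoOn g (Set.Ici 0))
    (hV : Continuous V) (hVper : Per V)
    (hφ : Continuous φ) (hφper : Per φ) (hφpos : ∀ x, 0 < φ x)
    (m u : Ed d → ℝ)
    (hm : ContDiff ℝ 2 m) (hmper : Per m) (hmnn : ∀ x, 0 ≤ m x)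
    (hu : ContDiff ℝ 1 u) (huper : Per u)
    (hflux : ∀ i, ContDiff ℝ 1 (flux H m u i))
    (heq1 : ∀ x, F1 H g V m u x = 0)
    (heq2 : ∀ x, F2 H φ m u x = 0) :
    ∀ x, 0 < m x := by
  intro x
  rcases (hmnn x).lt_or_eq with h | h
  · exact h
  exfalso
  have hmx : m x = 0 := h.symm
  -- x is a local minimum of m, so Dm(x) = 0
  have hmin : IsLocalMin m x := Filter.Eventually.of_forall fun y => by
    rw [hmx]; exact hmnn y
  have hdm : fderiv ℝ m x = 0 := hmin.fderiv_eq_zero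
  have hmd : HasFDerivAt m (0 : Ed d →L[ℝ] ℝ) x := by
    have := ((hm.differentiable (by norm_num)) x).hasFDerivAt
    rwa [hdm] at this
  -- the coefficient h_i is continuous
  have hgradu : Continuous (grad u) := by
    apply continuous_pi
    intro j
    exact (hu.continuous_fderiv (by norm_num)).clm_apply continuous_const
  have hhcont : ∀ i : Fin d, Continuous fun y => pd i H (grad u y) := by
    intro i
    exact (((hH.continuous_fderiv (by norm_num)).comp hgradu).clm_apply continuous_const)
  -- each flux component has zero derivative at x
  have hfi : ∀ i : Fin d, pd i (flux H m u i) x = 0 := by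
    intro i
    have h1 : (fun y => m y) =o[nhds x] fun y => y - x := by
      simpa [hmx] using hmd.isLittleO
    have h2 : (fun y => pd i H (grad u y)) =O[nhds x] fun _ => (1 : ℝ) :=
      ((hhcont i).continuousAt (x := x)).isBigO_one ℝ
    have h3 : (fun y => m y * pd i H (grad u y)) =o[nhds x] fun y => y - x := by
      have := (h1.norm_right.mul_isBigO h2)
      have h4 : (fun y => m y * pd i H (grad u y)) =o[nhds x]
          fun y => ‖y - x‖ * 1 := this
      simp only [mul_one] at h4
      exact (Asymptotics.isLittleO_norm_right).mp h4
    have hfd : HasFDerivAt (flux H m u i) (0 : Ed d →L[ℝ] ℝ) x :=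
      HasFDerivAt.of_isLittleO (by simpa [flux, hmx] using h3)
    simp [pd, hfd.fderiv]
  -- conclude: F2 at x gives φ x = 0, contradiction
  have := heq2 x
  rw [F2, divFlux] at this
  simp only [hfi, Finset.sum_const_zero, hmx] at this
  have : φ x = 0 := by linarith
  exact absurd this (ne_of_gt (hφpos x))
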